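/- arXiv:2502.01447 — 4 statements merged into one kernel-verified Lean document; each statement's English description precedes it below -/
import Mathlib

section
/- Let l ≥ 1 be a natural number and set N = 4l+3. In Λ(ℂ^N), define Ω := e_1∧…∧e_{2l} + e_{2l+1}∧…∧e_{4l}. Then for every element z of the subalgebra of Λ(ℂ^N) generated by e_1, …, e_{4l}, and every σ in the linear span of { e_i∧e_j : 1 ≤ i < j ≤ 4l }, one has (Ω∧e_{4l+3}) ∧ ( z∧e_{4l+3} + Ω∧(e_{4l+1}∧e_{4l+2} + σ) ) = 2·e_1∧…∧e_{4l+3}; in particular this product is nonzero. -/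
/-- The 1-based `i`-th standard basis vector of `ℂ^N`, viewed inside the
exterior algebra `Λ(ℂ^N)` via the canonical inclusion `ι`. -/
noncomputable def e (N : ℕ) (i : ℕ) : ExteriorAlgebra ℂ (Fin N → ℂ) :=
  ExteriorAlgebra.ι ℂ (fun k : Fin N => if (k : ℕ) + 1 = i then (1 : ℂ) else 0)

/-- The wedge product `e_a ∧ e_{a+1} ∧ … ∧ e_{a+n−1}` in `Λ(ℂ^N)`. -/
noncomputable def wedgeSeq (N a n : ℕ) : ExteriorAlgebra ℂ (Fin N → ℂ) :=
  ((List.range' a n).map (e N)).prod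

namespace Stmt1Aux

variable {N : ℕ}

lemma e_sq (i : ℕ) : e N i * e N i = 0 := ExteriorAlgebra.ι_sq_zero _

lemma involute_e (i : ℕ) : CliffordAlgebra.involute (e N i) = - e N i :=
  CliffordAlgebra.involute_ι _

lemma ι_comm (v : Fin N → ℂ) (x : ExteriorAlgebra ℂ (Fin N → ℂ)) :
    ExteriorAlgebra.ι ℂ v * x = CliffordAlgebra.involute x * ExteriorAlgebra.ι ℂ v := by
  induction x using ExteriorAlgebra.induction with
  | algebraMap r => rw [AlgHom.commutes, Algebra.commutes]
  | ι m =>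
      rw [CliffordAlgebra.involute_ι, neg_mul]
      exact eq_neg_of_add_eq_zero_left (ExteriorAlgebra.ι_add_mul_swap v m)
  | mul x y hx hy =>
      rw [map_mul, ← mul_assoc, hx, mul_assoc, hy, ← mul_assoc]
  | add x y hx hy =>
      rw [map_add, mul_add, hx, hy, add_mul]

lemma e_comm (i : ℕ) (x : ExteriorAlgebra ℂ (Fin N → ℂ)) :
    e N i * x = CliffordAlgebra.involute x * e N i := ι_comm _ _

lemma e_mul_pair_comm (k i j : ℕ) :
    e N k * (e N i * e N j) = (e N i * e N j) * e N k := by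
  rw [e_comm, map_mul, involute_e, involute_e, neg_mul_neg]

lemma prod_comm (L : List ℕ) (x : ExteriorAlgebra ℂ (Fin N → ℂ)) :
    (L.map (e N)).prod * x =
      (if Even L.length then x else CliffordAlgebra.involute x) * (L.map (e N)).prod := by
  induction L generalizing x with
  | nil => simp
  | cons j t ih =>
      simp only [List.map_cons, List.prod_cons, List.length_cons]
      rw [mul_assoc, ih x, ← mul_assoc, e_comm, mul_assoc]
      by_cases h : Even t.length
      · simp [h, Nat.even_add_one]
      · simp [h, Nat.even_add_one, CliffordAlgebra.involute_involute]

lemma mul_prod_eq_zero {i : ℕ} {L : List ℕ} (hi : i ∈ L) :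
    e N i * (L.map (e N)).prod = 0 := by
  induction L with
  | nil => simp at hi
  | cons j t ih =>
      simp only [List.map_cons, List.prod_cons]
      rcases List.mem_cons.mp hi with h | h
      · subst h; rw [← mul_assoc, e_sq, zero_mul]
      · have swap : e N i * e N j = -(e N j * e N i) :=
          eq_neg_of_add_eq_zero_left (ExteriorAlgebra.ι_add_mul_swap _ _)
        rw [← mul_assoc, swap, neg_mul, mul_assoc, ih h, mul_zero, neg_zero]

lemma prod_mul_eq_zero {i : ℕ} {L : List ℕ} (hi : i ∈ L)
    {x : ExteriorAlgebra ℂ (Fin N → ℂ)} (hx : e N i * x = 0) :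
    (L.map (e N)).prod * x = 0 := by
  induction L with
  | nil => simp at hi
  | cons j t ih =>
      simp only [List.map_cons, List.prod_cons]
      rcases List.mem_cons.mp hi with h | h
      · subst h
        rw [e_comm _ ((t.map (e N)).prod), mul_assoc, hx, mul_zero]
      · rw [mul_assoc, ih h, mul_zero]

lemma e_mul_wedgeSeq_eq_zero {i a n : ℕ} (h1 : a ≤ i) (h2 : i < a + n) :
    e N i * wedgeSeq N a n = 0 :=
  mul_prod_eq_zero (List.mem_range'_1.mpr ⟨h1, h2⟩)

lemma wedgeSeq_mul_eq_zero {i a n : ℕ} (h1 : a ≤ i) (h2 : i < a + n)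
    {x : ExteriorAlgebra ℂ (Fin N → ℂ)} (hx : e N i * x = 0) :
    wedgeSeq N a n * x = 0 :=
  prod_mul_eq_zero (List.mem_range'_1.mpr ⟨h1, h2⟩) hx

lemma wedgeSeq_comm {n : ℕ} (a : ℕ) (hn : Even n) (x : ExteriorAlgebra ℂ (Fin N → ℂ)) :
    wedgeSeq N a n * x = x * wedgeSeq N a n := by
  have h := prod_comm (N := N) (List.range' a n) x
  rwa [List.length_range', if_pos hn] at h

lemma wedgeSeq_append {a m n b : ℕ} (h : b = a + m) :
    wedgeSeq N a m * wedgeSeq N b n = wedgeSeq N a (m + n) := by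
  subst h
  rw [wedgeSeq, wedgeSeq, wedgeSeq, ← List.prod_append, ← List.map_append,
    List.range'_append_1]

lemma wedgeSeq_one (a : ℕ) : wedgeSeq N a 1 = e N a := by
  simp [wedgeSeq]

lemma wedgeSeq_mul_e {a n m : ℕ} (h : m = a + n) :
    wedgeSeq N a n * e N m = wedgeSeq N a (n + 1) := by
  rw [← wedgeSeq_one m, wedgeSeq_append h]

/-- Family of alternating forms: the determinant form in top degree, zero elsewhere. -/
noncomputable def detFam (N : ℕ) : ∀ i : ℕ, (Fin N → ℂ) [⋀^Fin i]→ₗ[ℂ] ℂ :=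
  fun i => if h : i = N then h ▸ (Pi.basisFun ℂ (Fin N)).det else 0

lemma top_ne_zero : wedgeSeq N 1 N ≠ 0 := by
  have hW : wedgeSeq N 1 N =
      ExteriorAlgebra.ιMulti ℂ N (fun i : Fin N => Pi.basisFun ℂ (Fin N) i) := by
    rw [ExteriorAlgebra.ιMulti_apply, wedgeSeq, List.ofFn_eq_map,
      List.range'_eq_map_range, ← show (List.finRange N).map Fin.val = List.range N from
        List.ext_getElem (by simp) (by simp), List.map_map, List.map_map]
    congr 1
    apply List.map_congr_left
    intro i _
    simp only [Function.comp_apply, e, Pi.basisFun_apply]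
    congr 1
    funext k
    rw [Pi.single_apply]
    congr 1
    · simp only [eq_iff_iff]
      constructor
      · intro h; exact Fin.ext (by omega)
      · intro h; subst h; omega
  intro h0
  have h1 := congrArg (fun y => ExteriorAlgebra.liftAlternating (detFam N) y) h0
  simp only [hW, map_zero, ExteriorAlgebra.liftAlternating_apply_ιMulti] at h1
  have hd : detFam N N = (Pi.basisFun ℂ (Fin N)).det := by simp [detFam]
  rw [hd] at h1
  rw [show (fun i : Fin N => Pi.basisFun ℂ (Fin N) i) = ⇑(Pi.basisFun ℂ (Fin N)) from rfl,
    Module.Basis.det_self] at h1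
  exact one_ne_zero h1

end Stmt1Aux

open Stmt1Aux in
set_option maxHeartbeats 1000000 in
theorem stmt_1 (l : ℕ) (hl : 1 ≤ l)
    (z : ExteriorAlgebra ℂ (Fin (4 * l + 3) → ℂ))
    (hz : z ∈ Algebra.adjoin ℂ {x | ∃ i, 1 ≤ i ∧ i ≤ 4 * l ∧ x = e (4 * l + 3) i})
    (σ : ExteriorAlgebra ℂ (Fin (4 * l + 3) → ℂ))
    (hσ : σ ∈ Submodule.span ℂ
      {x | ∃ i j, 1 ≤ i ∧ i < j ∧ j ≤ 4 * l ∧ x = e (4 * l + 3) i * e (4 * l + 3) j}) :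
    ((wedgeSeq (4 * l + 3) 1 (2 * l) + wedgeSeq (4 * l + 3) (2 * l + 1) (2 * l)) *
        e (4 * l + 3) (4 * l + 3)) *
      (z * e (4 * l + 3) (4 * l + 3) +
        (wedgeSeq (4 * l + 3) 1 (2 * l) + wedgeSeq (4 * l + 3) (2 * l + 1) (2 * l)) *
          (e (4 * l + 3) (4 * l + 1) * e (4 * l + 3) (4 * l + 2) + σ)) =
      (2 : ℂ) • wedgeSeq (4 * l + 3) 1 (4 * l + 3) ∧
    ((wedgeSeq (4 * l + 3) 1 (2 * l) + wedgeSeq (4 * l + 3) (2 * l + 1) (2 * l)) *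
        e (4 * l + 3) (4 * l + 3)) *
      (z * e (4 * l + 3) (4 * l + 3) +
        (wedgeSeq (4 * l + 3) 1 (2 * l) + wedgeSeq (4 * l + 3) (2 * l + 1) (2 * l)) *
          (e (4 * l + 3) (4 * l + 1) * e (4 * l + 3) (4 * l + 2) + σ)) ≠ 0 := by
  set A := wedgeSeq (4 * l + 3) 1 (2 * l) with hA
  set B := wedgeSeq (4 * l + 3) (2 * l + 1) (2 * l) with hB
  set W := wedgeSeq (4 * l + 3) 1 (4 * l) with hW
  set W' := wedgeSeq (4 * l + 3) 1 (4 * l + 3) with hW'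
  set E := e (4 * l + 3) (4 * l + 3) with hE
  set P1 := e (4 * l + 3) (4 * l + 1) with hP1
  set P2 := e (4 * l + 3) (4 * l + 2) with hP2
  set Ω := A + B with hΩ
  have hev : Even (2 * l) := even_two_mul l
  have hAA : A * A = 0 := by
    rw [hA]
    exact wedgeSeq_mul_eq_zero le_rfl (by omega)
      (e_mul_wedgeSeq_eq_zero le_rfl (by omega))
  have hBB : B * B = 0 := by
    rw [hB]
    exact wedgeSeq_mul_eq_zero le_rfl (by omega)
      (e_mul_wedgeSeq_eq_zero le_rfl (by omega))
  have hAB : A * B = W := by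
    rw [hA, hB, hW, wedgeSeq_append (show 2 * l + 1 = 1 + 2 * l by omega),
      show 2 * l + 2 * l = 4 * l by omega]
  have hBA : B * A = A * B := (wedgeSeq_comm 1 hev B).symm
  have hΩΩ : Ω * Ω = W + W := by
    rw [hΩ, add_mul, mul_add, mul_add, hAA, hBB, hBA, hAB]
    abel
  have hEΩ : E * Ω = Ω * E := by
    rw [hΩ, mul_add, add_mul, hA, hB, wedgeSeq_comm 1 hev E,
      wedgeSeq_comm (2 * l + 1) hev E]
  have hswap : ∀ Y, (Ω * E) * (Ω * Y) = ((Ω * Ω) * E) * Y := by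
    intro Y
    rw [← mul_assoc, mul_assoc Ω E Ω, hEΩ, ← mul_assoc]
  have h1 : (Ω * E) * (z * E) = 0 := by
    rw [mul_assoc, ← mul_assoc E z E, hE, e_comm, mul_assoc, e_sq, mul_zero, mul_zero]
  have hWe : ∀ i : ℕ, 1 ≤ i → i ≤ 4 * l → (Ω * Ω) * e (4 * l + 3) i = 0 := by
    intro i hi1 hi2
    rw [hΩΩ, add_mul, hW, wedgeSeq_mul_eq_zero hi1 (by omega) (e_sq i), add_zero]
  have hσ0 : ((Ω * Ω) * E) * σ = 0 := by
    have hle : Submodule.span ℂ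
        {x | ∃ i j, 1 ≤ i ∧ i < j ∧ j ≤ 4 * l ∧
          x = e (4 * l + 3) i * e (4 * l + 3) j} ≤
        LinearMap.ker (LinearMap.mulLeft ℂ ((Ω * Ω) * E)) := by
      rw [Submodule.span_le]
      rintro x ⟨i, j, hi1, hij, hj, rfl⟩
      simp only [SetLike.mem_coe, LinearMap.mem_ker, LinearMap.mulLeft_apply]
      rw [mul_assoc, hE, e_mul_pair_comm, ← mul_assoc, ← mul_assoc,
        hWe i hi1 (by omega), zero_mul, zero_mul]
    have hmem := hle hσ
    simpa only [LinearMap.mem_ker, LinearMap.mulLeft_apply] using hmem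
  have hWP : wedgeSeq (4 * l + 3) 1 (4 * l) *
      (e (4 * l + 3) (4 * l + 1) * e (4 * l + 3) (4 * l + 2) * e (4 * l + 3) (4 * l + 3)) =
      W' := by
    rw [← mul_assoc, ← mul_assoc,
      wedgeSeq_mul_e (show 4 * l + 1 = 1 + 4 * l by omega),
      wedgeSeq_mul_e (show 4 * l + 2 = 1 + (4 * l + 1) by omega),
      wedgeSeq_mul_e (show 4 * l + 3 = 1 + (4 * l + 1 + 1) by omega), hW',
      show 4 * l + 1 + 1 + 1 = 4 * l + 3 by omega]
  have h2 : ((Ω * Ω) * E) * (P1 * P2) = W' + W' := by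
    rw [hP1, hP2, hE, mul_assoc, e_mul_pair_comm, hΩΩ, add_mul, hW, hWP]
  have heq : (Ω * E) * (z * E + Ω * (P1 * P2 + σ)) = (2 : ℂ) • W' := by
    rw [mul_add, h1, zero_add, hswap, mul_add, h2, hσ0, add_zero, two_smul]
  refine ⟨heq, ?_⟩
  rw [heq, hW']
  exact smul_ne_zero two_ne_zero (top_ne_zero (N := 4 * l + 3))
end

section
/- Work in Λ(ℂ^7). Let a_{ui} ∈ ℂ be given for all 3 ≤ u ≤ i ≤ 7. Define the 1-forms γ_u := Σ_{i=u}^{7} a_{ui}·e_i and the 2-forms δ_u := Σ_{i=u}^{7} a_{ui}·(e_{i−1}∧e_1) for u = 3, …, 7, and set Q := γ_4∧γ_5 + γ_5∧γ_6 + γ_6∧γ_7 and ∂Q := δ_4∧γ_5 − γ_4∧δ_5 + δ_5∧γ_6 − γ_5∧δ_6 + δ_6∧γ_7 − γ_6∧δ_7. Then (γ_3∧Q) ∧ (δ_3∧Q − γ_3∧∂Q) = −2·a_{33}·(a_{33}·a_{44}·a_{55}·a_{66}·a_{77})·e_1∧e_2∧e_3∧e_4∧e_5∧e_6∧e_7.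 In particular, if a_{33}, a_{44}, a_{55}, a_{66}, a_{77} are all nonzero, this product is nonzero. -/
/-- The 1-form `γ_u := Σ_{i=u}^{7} a_{ui}·e_i` in `Λ(ℂ^7)`. -/
noncomputable def γform (a : ℕ → ℕ → ℂ) (u : ℕ) : ExteriorAlgebra ℂ (Fin 7 → ℂ) :=
  ∑ i ∈ Finset.Icc u 7, a u i • e 7 i

/-- The 2-form `δ_u := Σ_{i=u}^{7} a_{ui}·(e_{i−1}∧e_1)` in `Λ(ℂ^7)`. -/
noncomputable def δform (a : ℕ → ℕ → ℂ) (u : ℕ) : ExteriorAlgebra ℂ (Fin 7 → ℂ) :=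
  ∑ i ∈ Finset.Icc u 7, a u i • (e 7 (i - 1) * e 7 1)

/-- `Q := γ_4∧γ_5 + γ_5∧γ_6 + γ_6∧γ_7`. -/
noncomputable def Qform (a : ℕ → ℕ → ℂ) : ExteriorAlgebra ℂ (Fin 7 → ℂ) :=
  γform a 4 * γform a 5 + γform a 5 * γform a 6 + γform a 6 * γform a 7

/-- `∂Q := δ_4∧γ_5 − γ_4∧δ_5 + δ_5∧γ_6 − γ_5∧δ_6 + δ_6∧γ_7 − γ_6∧δ_7`. -/
noncomputable def dQform (a : ℕ → ℕ → ℂ) : ExteriorAlgebra ℂ (Fin 7 → ℂ) :=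
  δform a 4 * γform a 5 - γform a 4 * δform a 5 + δform a 5 * γform a 6 -
    γform a 5 * δform a 6 + δform a 6 * γform a 7 - γform a 6 * δform a 7

open ExteriorAlgebra

section Aux

/-- anticommutation of two generators -/
lemma aux_iswap {M : Type*} [AddCommGroup M] [Module ℂ M] (x y : M) :
    ι ℂ y * ι ℂ x = -(ι ℂ x * ι ℂ y) := by
  have := ι_add_mul_swap (R := ℂ) x y
  linear_combination (norm := noncomm_ring) this

@[simp] lemma aux_esq (i : ℕ) : e 7 i * e 7 i = 0 := ι_sq_zero _
@[simp] lemma aux_esq' (i : ℕ) (x : ExteriorAlgebra ℂ (Fin 7 → ℂ)) :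
    e 7 i * (e 7 i * x) = 0 := by rw [← mul_assoc, aux_esq, zero_mul]
@[simp] lemma aux_eswap (i j : ℕ) (_h : i < j) : e 7 j * e 7 i = -(e 7 i * e 7 j) :=
  aux_iswap _ _
@[simp] lemma aux_eswap' (i j : ℕ) (h : i < j) (x : ExteriorAlgebra ℂ (Fin 7 → ℂ)) :
    e 7 j * (e 7 i * x) = -(e 7 i * (e 7 j * x)) := by
  rw [← mul_assoc, aux_eswap i j h, neg_mul, mul_assoc]

lemma aux_γ_eq_ι (a : ℕ → ℕ → ℂ) (u : ℕ) :
    γform a u = ι ℂ (∑ i ∈ Finset.Icc u 7,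
      a u i • (fun k : Fin 7 => if (k : ℕ) + 1 = i then (1 : ℂ) else 0)) := by
  simp [γform, e, map_sum]

lemma aux_gsq (a : ℕ → ℕ → ℂ) (u : ℕ) : γform a u * γform a u = 0 := by
  rw [aux_γ_eq_ι]; exact ι_sq_zero _
lemma aux_gsq' (a : ℕ → ℕ → ℂ) (u : ℕ) (x : ExteriorAlgebra ℂ (Fin 7 → ℂ)) :
    γform a u * (γform a u * x) = 0 := by rw [← mul_assoc, aux_gsq, zero_mul]
lemma aux_gswap (a : ℕ → ℕ → ℂ) (u v : ℕ) (_h : u < v) :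
    γform a v * γform a u = -(γform a u * γform a v) := by
  rw [aux_γ_eq_ι a u, aux_γ_eq_ι a v]; exact aux_iswap _ _
lemma aux_gswap' (a : ℕ → ℕ → ℂ) (u v : ℕ) (h : u < v) (x : ExteriorAlgebra ℂ (Fin 7 → ℂ)) :
    γform a v * (γform a u * x) = -(γform a u * (γform a v * x)) := by
  rw [← mul_assoc, aux_gswap a u v h, neg_mul, mul_assoc]

/-- a product of two generators commutes with a generator -/
lemma aux_pair_comm {M : Type*} [AddCommGroup M] [Module ℂ M] (x y v : M) :
    (ι ℂ x * ι ℂ y) * ι ℂ v = ι ℂ v * (ι ℂ x * ι ℂ y) := by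
  rw [mul_assoc, aux_iswap v y, mul_neg, ← mul_assoc, aux_iswap v x, neg_mul, neg_neg,
    mul_assoc]

lemma aux_Qcomm_ι (a : ℕ → ℕ → ℂ) (v : Fin 7 → ℂ) :
    Qform a * ι ℂ v = ι ℂ v * Qform a := by
  simp only [Qform, add_mul, mul_add, aux_γ_eq_ι, aux_pair_comm]

/-- `Q` commutes with any generator product pair -/
lemma aux_Qcomm_pair (a : ℕ → ℕ → ℂ) (v w : Fin 7 → ℂ) :
    Qform a * (ι ℂ v * ι ℂ w) = (ι ℂ v * ι ℂ w) * Qform a := by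
  rw [← mul_assoc, aux_Qcomm_ι a v, mul_assoc, aux_Qcomm_ι a w, mul_assoc]

lemma aux_Qcomm_γ (a : ℕ → ℕ → ℂ) : Qform a * γform a 3 = γform a 3 * Qform a := by
  rw [aux_γ_eq_ι a 3]; exact aux_Qcomm_ι a _

lemma aux_δQcomm (a : ℕ → ℕ → ℂ) : δform a 3 * Qform a = Qform a * δform a 3 := by
  unfold δform
  rw [Finset.sum_mul, Finset.mul_sum]
  refine Finset.sum_congr rfl fun i _ => ?_
  rw [smul_mul_assoc, mul_smul_comm]
  congr 1
  exact (aux_Qcomm_pair a _ _).symm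

lemma aux_QQ (a : ℕ → ℕ → ℂ) :
    Qform a * Qform a = (2:ℂ) • (γform a 4 * (γform a 5 * (γform a 6 * γform a 7))) := by
  simp only [Qform, mul_add, add_mul, mul_assoc]
  simp [aux_gsq, aux_gsq', aux_gswap, aux_gswap', two_smul]

lemma aux_P (a : ℕ → ℕ → ℂ) :
    γform a 3 * (γform a 4 * (γform a 5 * (γform a 6 * γform a 7))) =
      (a 3 3 * a 4 4 * a 5 5 * a 6 6 * a 7 7) •
        (e 7 3 * (e 7 4 * (e 7 5 * (e 7 6 * e 7 7)))) := by
  have i3 : Finset.Icc 3 7 = {3,4,5,6,7} := rfl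
  have i4 : Finset.Icc 4 7 = {4,5,6,7} := rfl
  have i5 : Finset.Icc 5 7 = {5,6,7} := rfl
  have i6 : Finset.Icc 6 7 = {6,7} := rfl
  have i7 : Finset.Icc 7 7 = {7} := rfl
  simp only [γform, i3, i4, i5, i6, i7, Finset.sum_insert, Finset.mem_insert,
    Finset.mem_singleton, Finset.sum_singleton]
  simp [mul_add, add_mul, smul_mul_assoc, mul_smul_comm, smul_smul, mul_assoc]
  congr 1
  ring

lemma aux_Wδ (a : ℕ → ℕ → ℂ) :
    (e 7 3 * (e 7 4 * (e 7 5 * (e 7 6 * e 7 7)))) * δform a 3 =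
      -(a 3 3 • wedgeSeq 7 1 7) := by
  have i3 : Finset.Icc 3 7 = {3,4,5,6,7} := rfl
  simp only [δform, i3, Finset.sum_insert, Finset.mem_insert,
    Finset.mem_singleton, Finset.sum_singleton]
  simp [wedgeSeq, List.range', mul_add, mul_smul_comm, mul_assoc]

noncomputable def detMap (i : ℕ) : (Fin 7 → ℂ) [⋀^Fin i]→ₗ[ℂ] ℂ :=
  if h : i = 7 then h ▸ (Pi.basisFun ℂ (Fin 7)).det else 0

lemma aux_e_eq_basis (i : Fin 7) : e 7 ((i : ℕ) + 1) = ι ℂ ((Pi.basisFun ℂ (Fin 7)) i) := by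
  unfold e
  exact congrArg (ι ℂ) (by funext k; fin_cases i <;> fin_cases k <;> simp [Pi.single_apply])

lemma aux_wedgeSeq_eq_ιMulti :
    wedgeSeq 7 1 7 = ιMulti ℂ 7 (fun i : Fin 7 => (Pi.basisFun ℂ (Fin 7)) i) := by
  rw [ιMulti_apply]
  show (List.map (e 7) [1,2,3,4,5,6,7]).prod = _
  simp only [List.ofFn_succ, List.ofFn_zero, List.map_cons, List.map_nil]
  rw [show e 7 1 = ι ℂ ((Pi.basisFun ℂ (Fin 7)) 0) from aux_e_eq_basis 0,
    show e 7 2 = ι ℂ ((Pi.basisFun ℂ (Fin 7)) 1) from aux_e_eq_basis 1,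
    show e 7 3 = ι ℂ ((Pi.basisFun ℂ (Fin 7)) 2) from aux_e_eq_basis 2,
    show e 7 4 = ι ℂ ((Pi.basisFun ℂ (Fin 7)) 3) from aux_e_eq_basis 3,
    show e 7 5 = ι ℂ ((Pi.basisFun ℂ (Fin 7)) 4) from aux_e_eq_basis 4,
    show e 7 6 = ι ℂ ((Pi.basisFun ℂ (Fin 7)) 5) from aux_e_eq_basis 5,
    show e 7 7 = ι ℂ ((Pi.basisFun ℂ (Fin 7)) 6) from aux_e_eq_basis 6]
  rfl

lemma aux_wedgeSeq_ne_zero : wedgeSeq 7 1 7 ≠ 0 := by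
  intro h
  have h2 := congrArg (liftAlternating (R := ℂ) detMap) h
  rw [aux_wedgeSeq_eq_ιMulti, liftAlternating_apply_ιMulti, map_zero] at h2
  have h1 : detMap 7 (fun i : Fin 7 => (Pi.basisFun ℂ (Fin 7)) i) = 1 := by
    have hd : detMap 7 = (Pi.basisFun ℂ (Fin 7)).det := by simp [detMap]
    rw [hd]
    have he : (fun i : Fin 7 => (Pi.basisFun ℂ (Fin 7)) i) = ⇑(Pi.basisFun ℂ (Fin 7)) := rfl
    rw [he, Module.Basis.det_apply, Module.Basis.toMatrix_self]
    exact Matrix.det_one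
  rw [h1] at h2
  exact one_ne_zero h2

lemma aux_main (a : ℕ → ℕ → ℂ) :
    (γform a 3 * Qform a) * (δform a 3 * Qform a - γform a 3 * dQform a) =
      (-2 * a 3 3 * (a 3 3 * a 4 4 * a 5 5 * a 6 6 * a 7 7)) • wedgeSeq 7 1 7 := by
  rw [mul_sub]
  have hz : (γform a 3 * Qform a) * (γform a 3 * dQform a) = 0 := by
    rw [mul_assoc, ← mul_assoc (Qform a), aux_Qcomm_γ, mul_assoc, aux_gsq']
  rw [hz, sub_zero]
  calc (γform a 3 * Qform a) * (δform a 3 * Qform a)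
      = γform a 3 * ((Qform a * Qform a) * δform a 3) := by
        rw [aux_δQcomm, mul_assoc, ← mul_assoc (Qform a)]
    _ = (2:ℂ) • ((γform a 3 * (γform a 4 * (γform a 5 * (γform a 6 * γform a 7)))) * δform a 3) := by
        rw [aux_QQ, smul_mul_assoc, mul_smul_comm, ← mul_assoc]
    _ = (2:ℂ) • ((a 3 3 * a 4 4 * a 5 5 * a 6 6 * a 7 7) •
          ((e 7 3 * (e 7 4 * (e 7 5 * (e 7 6 * e 7 7)))) * δform a 3)) := by
        rw [aux_P, smul_mul_assoc]
    _ = (-2 * a 3 3 * (a 3 3 * a 4 4 * a 5 5 * a 6 6 * a 7 7)) • wedgeSeq 7 1 7 := by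
        rw [aux_Wδ a]
        rw [smul_neg, smul_smul, smul_neg, smul_smul, ← neg_smul]
        congr 1
        ring

end Aux

/-- in `Λ(ℂ^7)`,
`(γ_3∧Q) ∧ (δ_3∧Q − γ_3∧∂Q) = −2·a_{33}·(a_{33}a_{44}a_{55}a_{66}a_{77})·e_1∧…∧e_7`;
in particular this product is nonzero when the diagonal entries are all nonzero. -/
theorem stmt_3 (a : ℕ → ℕ → ℂ) :
    (γform a 3 * Qform a) * (δform a 3 * Qform a - γform a 3 * dQform a) =
      (-2 * a 3 3 * (a 3 3 * a 4 4 * a 5 5 * a 6 6 * a 7 7)) • wedgeSeq 7 1 7 ∧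
    ((a 3 3 ≠ 0 ∧ a 4 4 ≠ 0 ∧ a 5 5 ≠ 0 ∧ a 6 6 ≠ 0 ∧ a 7 7 ≠ 0) →
      (γform a 3 * Qform a) * (δform a 3 * Qform a - γform a 3 * dQform a) ≠ 0) := by
  refine ⟨aux_main a, fun ⟨h3, h4, h5, h6, h7⟩ h0 => ?_⟩
  rw [aux_main a, smul_eq_zero] at h0
  rcases h0 with h0 | h0
  · refine absurd h0 ?_
    simp only [mul_ne_zero_iff]
    norm_num [h3, h4, h5, h6, h7]
  · exact aux_wedgeSeq_ne_zero h0
end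

section
/- Let l ≥ 1 be a natural number and set N = 4l+3. In Λ(ℂ^N), set β := Σ_{j=1}^{2l+1} e_{2j−1}∧e_{2j}. Then (e_{4l+3}∧β^l) ∧ β^{l+1} = (2l+1)!·e_1∧e_2∧…∧e_{4l+3}; in particular this product is nonzero. -/
section Aux

variable {A : Type*} [Ring A]

lemma key_pow (a b : A) (h : Commute a b) (ha : a * a = 0) :
    ∀ n : ℕ, (a + b) ^ (n + 1) = b ^ (n + 1) + (n + 1) • (a * b ^ n) := by
  intro n
  induction n with
  | zero => simp; exact add_comm a b
  | succ n ih =>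
    rw [pow_succ, ih]
    have hba : b ^ (n + 1) * a = a * b ^ (n + 1) := ((h.symm.pow_left _).eq)
    have h0 : a * b ^ n * a = 0 := by
      have : b ^ n * a = a * b ^ n := ((h.symm.pow_left _).eq)
      rw [mul_assoc, this, ← mul_assoc, ha, zero_mul]
    rw [add_mul, mul_add, mul_add, smul_mul_assoc, smul_mul_assoc, h0, smul_zero, hba,
      mul_assoc a (b ^ n) b, ← pow_succ, ← pow_succ,
      succ_nsmul (a * b ^ (n + 1)) (n + 1)]
    abel

lemma list_sum_pow_zero (L : List A) (hc : L.Pairwise Commute)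
    (hsq : ∀ x ∈ L, x * x = 0) : ∀ m : ℕ, L.sum ^ (L.length + 1 + m) = 0 := by
  induction L with
  | nil => intro m; simp [zero_pow]
  | cons a L ih =>
    rw [List.pairwise_cons] at hc
    intro m
    have hC : Commute a L.sum := Commute.list_sum_right a L hc.1
    have hih := ih hc.2 (fun x hx => hsq x (List.mem_cons_of_mem a hx))
    have key := key_pow a L.sum hC (hsq a List.mem_cons_self) (L.length + 1 + m)
    have h1 : (a :: L).length + 1 + m = (L.length + 1 + m) + 1 := by simp; omega
    rw [List.sum_cons, h1, key]
    have h2 : L.length + 1 + m + 1 = L.length + 1 + (m + 1) := by omega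
    rw [h2, hih (m + 1), hih m, mul_zero, smul_zero, add_zero]

lemma list_sum_pow_length (L : List A) (hc : L.Pairwise Commute)
    (hsq : ∀ x ∈ L, x * x = 0) :
    L.sum ^ L.length = L.length.factorial • L.prod := by
  induction L with
  | nil => simp
  | cons a L ih =>
    rw [List.pairwise_cons] at hc
    have hC : Commute a L.sum := Commute.list_sum_right a L hc.1
    have hih := ih hc.2 (fun x hx => hsq x (List.mem_cons_of_mem a hx))
    have hz := list_sum_pow_zero L hc.2 (fun x hx => hsq x (List.mem_cons_of_mem a hx)) 0
    rw [List.sum_cons, List.length_cons,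
      key_pow a L.sum hC (hsq a List.mem_cons_self) L.length]
    rw [show L.length + 1 + 0 = L.length + 1 by omega] at hz
    rw [hz, zero_add, hih, List.prod_cons, Nat.factorial_succ, mul_smul_comm, smul_smul]

/-- Pairwise for a relation holding universally. -/
lemma list_pairwise_of_forall {α : Type*} {R : α → α → Prop} (h : ∀ a b, R a b) :
    ∀ L : List α, L.Pairwise R := by
  intro L
  induction L with
  | nil => exact List.Pairwise.nil
  | cons a L ih => exact List.Pairwise.cons (fun b _ => h a b) ih

lemma sum_Icc_eq_list_sum {B : Type*} [AddCommMonoid B] (f : ℕ → B) :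
    ∀ n : ℕ, (∑ j ∈ Finset.Icc 1 n, f j) = ((List.range' 1 n).map f).sum := by
  intro n
  induction n with
  | zero => simp
  | succ n ih =>
    rw [Finset.sum_Icc_succ_top (by omega) f, ih, List.range'_concat, List.map_append,
      List.sum_append]
    simp [Nat.add_comm]

end Aux

section Ext

lemma e_swap (N i j : ℕ) : e N i * e N j = -(e N j * e N i) := by
  have := ExteriorAlgebra.ι_add_mul_swap (R := ℂ)
    (fun k : Fin N => if (k : ℕ) + 1 = i then (1 : ℂ) else 0)
    (fun k : Fin N => if (k : ℕ) + 1 = j then (1 : ℂ) else 0)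
  unfold e
  exact eq_neg_of_add_eq_zero_left this

lemma e_sq (N i : ℕ) : e N i * e N i = 0 := ExteriorAlgebra.ι_sq_zero _

lemma pair_single_comm (N i j q : ℕ) :
    (e N i * e N j) * e N q = e N q * (e N i * e N j) := by
  calc (e N i * e N j) * e N q = e N i * (e N j * e N q) := mul_assoc _ _ _
    _ = e N i * -(e N q * e N j) := by rw [e_swap N j q]
    _ = -(e N i * e N q * e N j) := by rw [mul_neg, mul_assoc]
    _ = -(-(e N q * e N i) * e N j) := by rw [e_swap N i q]
    _ = e N q * (e N i * e N j) := by rw [neg_mul, neg_neg, mul_assoc]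

lemma pair_sq (N i j : ℕ) : (e N i * e N j) * (e N i * e N j) = 0 := by
  have h1 : (e N i * e N j) * e N i = e N i * (e N i * e N j) := pair_single_comm N i j i
  calc (e N i * e N j) * (e N i * e N j) = ((e N i * e N j) * e N i) * e N j := by
        noncomm_ring
    _ = (e N i * (e N i * e N j)) * e N j := by rw [h1]
    _ = ((e N i * e N i) * e N j) * e N j := by noncomm_ring
    _ = 0 := by rw [e_sq, zero_mul, zero_mul]

lemma pair_pair_comm (N i j p q : ℕ) :
    Commute (e N i * e N j) (e N p * e N q) := by
  show _ = _
  calc (e N i * e N j) * (e N p * e N q) = ((e N i * e N j) * e N p) * e N q := by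
        noncomm_ring
    _ = (e N p * (e N i * e N j)) * e N q := by rw [pair_single_comm]
    _ = e N p * ((e N i * e N j) * e N q) := by rw [mul_assoc]
    _ = e N p * (e N q * (e N i * e N j)) := by rw [pair_single_comm]
    _ = (e N p * e N q) * (e N i * e N j) := by rw [mul_assoc]

lemma prod_pairs (N : ℕ) :
    ∀ n : ℕ, ((List.range' 1 n).map (fun j => e N (2 * j - 1) * e N (2 * j))).prod =
      ((List.range' 1 (2 * n)).map (e N)).prod := by
  intro n
  induction n with
  | zero => simp
  | succ n ih =>
    rw [List.range'_concat, List.map_append, List.prod_append, ih]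
    have h2 : 2 * (n + 1) = (2 * n + 1) + 1 := by omega
    rw [h2, List.range'_concat, List.range'_concat, List.map_append, List.map_append,
      List.prod_append, List.prod_append]
    simp only [List.map_cons, List.map_nil, List.prod_cons, List.prod_nil, mul_one]
    rw [mul_assoc]
    congr 2
    · congr 1; omega
    · congr 1; omega

lemma wedgeSeq_eq_iMulti (N : ℕ) :
    wedgeSeq N 1 N = ExteriorAlgebra.ιMulti ℂ N
      (fun i : Fin N => fun k : Fin N => if (k : ℕ) + 1 = (i : ℕ) + 1 then (1 : ℂ) else 0) := by
  rw [ExteriorAlgebra.ιMulti_apply]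
  unfold wedgeSeq
  congr 1
  apply List.ext_getElem
  · simp
  · intro i h1 h2
    simp only [List.getElem_map, List.getElem_range', List.getElem_ofFn]
    unfold e
    congr 1
    funext k
    congr 2
    omega

lemma wedgeSeq_ne_zero (N : ℕ) : wedgeSeq N 1 N ≠ 0 := by
  intro hzero
  set v : Fin N → (Fin N → ℂ) :=
    fun i => fun k => if (k : ℕ) + 1 = (i : ℕ) + 1 then (1 : ℂ) else 0 with hv
  have hw : wedgeSeq N 1 N = ExteriorAlgebra.ιMulti ℂ N v := wedgeSeq_eq_iMulti N
  set f : ∀ i : ℕ, (Fin N → ℂ) [⋀^Fin i]→ₗ[ℂ] ℂ :=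
    fun i => if h : i = N then h ▸ (Matrix.detRowAlternating (n := Fin N) (R := ℂ)) else 0
      with hf
  have h1 : ExteriorAlgebra.liftAlternating f (ExteriorAlgebra.ιMulti ℂ N v) = f N v :=
    ExteriorAlgebra.liftAlternating_apply_ιMulti f v
  rw [← hw, hzero, map_zero] at h1
  have h2 : f N v = Matrix.detRowAlternating (R := ℂ) v := by
    rw [hf]; simp
  have h3 : Matrix.detRowAlternating (R := ℂ) v = Matrix.det (Matrix.of v) := rfl
  have h4 : (Matrix.of v) = (1 : Matrix (Fin N) (Fin N) ℂ) := by
    ext i k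
    simp only [Matrix.of_apply, hv, Matrix.one_apply]
    by_cases h : k = i
    · subst h; simp
    · have : ¬((k : ℕ) + 1 = (i : ℕ) + 1) := by
        intro hh; exact h (Fin.ext (by omega))
      rw [if_neg this, if_neg (by exact fun hh => h hh.symm)]
  rw [h2, h3, h4, Matrix.det_one] at h1
  exact one_ne_zero h1.symm

end Ext

/-- for `N = 4l+3` and `β := Σ_{j=1}^{2l+1} e_{2j−1}∧e_{2j}` in `Λ(ℂ^N)`,
one has `(e_{4l+3}∧β^l) ∧ β^{l+1} = (2l+1)!·e_1∧…∧e_{4l+3}`; in particular it is nonzero. -/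
theorem stmt_9 (l : ℕ) (hl : 1 ≤ l) :
    (e (4 * l + 3) (4 * l + 3) *
        (∑ j ∈ Finset.Icc 1 (2 * l + 1),
          e (4 * l + 3) (2 * j - 1) * e (4 * l + 3) (2 * j)) ^ l) *
      (∑ j ∈ Finset.Icc 1 (2 * l + 1),
          e (4 * l + 3) (2 * j - 1) * e (4 * l + 3) (2 * j)) ^ (l + 1) =
      ((2 * l + 1).factorial : ℂ) • wedgeSeq (4 * l + 3) 1 (4 * l + 3) ∧
    (e (4 * l + 3) (4 * l + 3) *
        (∑ j ∈ Finset.Icc 1 (2 * l + 1),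
          e (4 * l + 3) (2 * j - 1) * e (4 * l + 3) (2 * j)) ^ l) *
      (∑ j ∈ Finset.Icc 1 (2 * l + 1),
          e (4 * l + 3) (2 * j - 1) * e (4 * l + 3) (2 * j)) ^ (l + 1) ≠ 0 := by
  set β := (∑ j ∈ Finset.Icc 1 (2 * l + 1),
    e (4 * l + 3) (2 * j - 1) * e (4 * l + 3) (2 * j)) with hβ
  set L := (List.range' 1 (2 * l + 1)).map
    (fun j => e (4 * l + 3) (2 * j - 1) * e (4 * l + 3) (2 * j)) with hL
  have hsum : β = L.sum := by
    rw [hβ, hL, sum_Icc_eq_list_sum]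
  have hlen : L.length = 2 * l + 1 := by simp [hL]
  have hc : L.Pairwise Commute := by
    rw [hL]
    exact (list_pairwise_of_forall (fun a b => pair_pair_comm (4 * l + 3) _ _ _ _) _).map _
      (fun a b h => h)
  have hsq : ∀ x ∈ L, x * x = 0 := by
    intro x hx
    rw [hL, List.mem_map] at hx
    obtain ⟨j, _, rfl⟩ := hx
    exact pair_sq (4 * l + 3) _ _
  have hpow : β ^ (2 * l + 1) =
      (2 * l + 1).factorial • wedgeSeq (4 * l + 3) 1 (4 * l + 2) := by
    rw [hsum, ← hlen, list_sum_pow_length L hc hsq, hlen]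
    congr 1
    rw [hL, prod_pairs (4 * l + 3) (2 * l + 1),
      show 2 * (2 * l + 1) = 4 * l + 2 by omega]
    rfl
  have hcommβ : Commute (e (4 * l + 3) (4 * l + 3)) β := by
    rw [hsum]
    apply Commute.list_sum_right
    intro x hx
    rw [hL, List.mem_map] at hx
    obtain ⟨j, _, rfl⟩ := hx
    exact (pair_single_comm (4 * l + 3) _ _ (4 * l + 3)).symm
  have hw : wedgeSeq (4 * l + 3) 1 (4 * l + 2) * e (4 * l + 3) (4 * l + 3) =
      wedgeSeq (4 * l + 3) 1 (4 * l + 3) := by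
    unfold wedgeSeq
    have h43 : List.range' 1 (4 * l + 3) = List.range' 1 (4 * l + 2) ++ [4 * l + 3] := by
      have h : List.range' 1 (4 * l + 2 + 1) = List.range' 1 (4 * l + 2) ++ [1 + 1 * (4 * l + 2)] :=
        List.range'_concat
      rw [show 1 + 1 * (4 * l + 2) = 4 * l + 3 by omega] at h
      rw [show (4 * l + 3 : ℕ) = (4 * l + 2) + 1 by omega]
      exact h
    rw [h43, List.map_append, List.prod_append]
    simp only [List.map_cons, List.map_nil, List.prod_cons, List.prod_nil, mul_one]
  have key : (e (4 * l + 3) (4 * l + 3) * β ^ l) * β ^ (l + 1) =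
      ((2 * l + 1).factorial : ℂ) • wedgeSeq (4 * l + 3) 1 (4 * l + 3) := by
    rw [mul_assoc, ← pow_add]
    rw [show l + (l + 1) = 2 * l + 1 by omega]
    rw [(hcommβ.pow_right (2 * l + 1)).eq, hpow, smul_mul_assoc, hw,
      Nat.cast_smul_eq_nsmul]
  refine ⟨key, ?_⟩
  rw [key]
  exact smul_ne_zero (by exact_mod_cast Nat.factorial_ne_zero _) (wedgeSeq_ne_zero (4 * l + 3))
end

section
/- Let n ≥ 1 and set N = n+4. Work in Λ(ℂ^N). Let u be an element of the subalgebra generated by e_1, …, e_n that is homogeneous of odd degree, let w be an arbitrary element of Λ(ℂ^N), and suppose u∧w = c·e_1∧…∧e_n for some c ∈ ℂ. Let a_{ji} ∈ ℂ be given for n+1 ≤ j ≤ i ≤ n+4, set η_j := Σ_{i=j}^{n+4} a_{ji}·e_i and R := η_{n+1}∧η_{n+2} + η_{n+2}∧η_{n+3} + η_{n+3}∧η_{n+4}. Then for every element D of Λ(ℂ^N), (u∧R) ∧ (w∧R − u∧D) = 2·c·a_{n+1,n+1}·a_{n+2,n+2}·a_{n+3,n+3}·a_{n+4,n+4}·e_1∧…∧e_{n+4}.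 -/
/-- The 1-form `η_j := Σ_{i=j}^{n+4} a_{ji}·e_i` in `Λ(ℂ^{n+4})`. -/
noncomputable def ηform (n : ℕ) (a : ℕ → ℕ → ℂ) (j : ℕ) :
    ExteriorAlgebra ℂ (Fin (n + 4) → ℂ) :=
  ∑ i ∈ Finset.Icc j (n + 4), a j i • e (n + 4) i

/-- `R := η_{n+1}∧η_{n+2} + η_{n+2}∧η_{n+3} + η_{n+3}∧η_{n+4}`. -/
noncomputable def Rform (n : ℕ) (a : ℕ → ℕ → ℂ) : ExteriorAlgebra ℂ (Fin (n + 4) → ℂ) :=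
  ηform n a (n + 1) * ηform n a (n + 2) + ηform n a (n + 2) * ηform n a (n + 3) +
    ηform n a (n + 3) * ηform n a (n + 4)

open ExteriorAlgebra
set_option maxHeartbeats 1000000

section Aux

variable {M : Type*} [AddCommGroup M] [Module ℂ M]

private lemma iota_swap (x y : M) : ι ℂ x * ι ℂ y = -(ι ℂ y * ι ℂ x) := by
  exact (eq_neg_of_add_eq_zero_left (ExteriorAlgebra.ι_add_mul_swap x y))

private lemma two_form_comm (x y : M) (z : ExteriorAlgebra ℂ M) :
    (ι ℂ x * ι ℂ y) * z = z * (ι ℂ x * ι ℂ y) := by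
  induction z using ExteriorAlgebra.induction with
  | algebraMap r => rw [Algebra.commutes]
  | ι m =>
      rw [mul_assoc, iota_swap y m, mul_neg, ← mul_assoc, iota_swap x m, neg_mul, neg_neg,
        mul_assoc]
  | mul a b ha hb => rw [← mul_assoc, ha, mul_assoc, hb, ← mul_assoc]
  | add a b ha hb => rw [mul_add, add_mul, ha, hb]

private lemma pow_iota_comm {k : ℕ} {u : ExteriorAlgebra ℂ M}
    (hu : u ∈ (LinearMap.range (ι ℂ : M →ₗ[ℂ] ExteriorAlgebra ℂ M)) ^ k) (m : M) :
    u * ι ℂ m = ((-1 : ℂ) ^ k) • (ι ℂ m * u) := by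
  induction hu using Submodule.pow_induction_on_right' with
  | algebraMap r => rw [pow_zero, one_smul, Algebra.commutes]
  | add x y i hx hy ihx ihy => rw [add_mul, ihx, ihy, ← smul_add, mul_add]
  | mul_mem i x hx ih m' hm' =>
      obtain ⟨v, rfl⟩ := hm'
      rw [mul_assoc, iota_swap v m, mul_neg, ← mul_assoc, ih, pow_succ]
      rw [smul_mul_assoc, mul_assoc, mul_smul, neg_one_smul, smul_neg]

private lemma pow_pow_comm {k j : ℕ} {u v : ExteriorAlgebra ℂ M}
    (hu : u ∈ (LinearMap.range (ι ℂ : M →ₗ[ℂ] ExteriorAlgebra ℂ M)) ^ k)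
    (hv : v ∈ (LinearMap.range (ι ℂ : M →ₗ[ℂ] ExteriorAlgebra ℂ M)) ^ j) :
    u * v = ((-1 : ℂ) ^ (k * j)) • (v * u) := by
  induction hv using Submodule.pow_induction_on_right' with
  | algebraMap r => rw [Nat.mul_zero, pow_zero, one_smul, Algebra.commutes]
  | add x y i hx hy ihx ihy => rw [mul_add, ihx, ihy, ← smul_add, add_mul]
  | mul_mem i x hx ih m' hm' =>
      obtain ⟨mv, rfl⟩ := hm'
      rw [← mul_assoc, ih, smul_mul_assoc, mul_assoc, pow_iota_comm hu, Nat.mul_succ, pow_add]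
      rw [mul_smul, mul_smul_comm, ← mul_assoc]

private lemma odd_sq_zero {k : ℕ} (hk : Odd k) {u : ExteriorAlgebra ℂ M}
    (hu : u ∈ (LinearMap.range (ι ℂ : M →ₗ[ℂ] ExteriorAlgebra ℂ M)) ^ k) :
    u * u = 0 := by
  have h := pow_pow_comm hu hu
  rw [Odd.neg_one_pow (hk.mul hk), neg_one_smul] at h
  have h2 : (2 : ℂ) • (u * u) = 0 := by
    rw [two_smul]
    nth_rewrite 1 [h]
    exact neg_add_cancel _
  exact (smul_eq_zero.mp h2).resolve_left two_ne_zero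

private lemma quad_eq (x0 x1 x2 x3 : M) :
    ι ℂ x0 * (ι ℂ x1 * (ι ℂ x2 * ι ℂ x3)) = ιMulti ℂ 4 ![x0, x1, x2, x3] := by
  rw [ExteriorAlgebra.ιMulti_apply]
  simp [List.ofFn_succ, mul_assoc]

private lemma quad_zero (x0 x1 x2 x3 : M) {i j : Fin 4}
    (h : ![x0, x1, x2, x3] i = ![x0, x1, x2, x3] j) (hij : i ≠ j) :
    ι ℂ x0 * (ι ℂ x1 * (ι ℂ x2 * ι ℂ x3)) = 0 := by
  rw [quad_eq]
  exact AlternatingMap.map_eq_zero_of_eq _ _ h hij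

private lemma quad_rot (x0 x1 x2 x3 : M) :
    ι ℂ x2 * (ι ℂ x3 * (ι ℂ x0 * ι ℂ x1)) = ι ℂ x0 * (ι ℂ x1 * (ι ℂ x2 * ι ℂ x3)) := by
  rw [quad_eq, quad_eq]
  have h1 : (![x2, x3, x0, x1] : Fin 4 → M) =
      (![x0, x1, x2, x3] ∘ Equiv.swap (0 : Fin 4) 2) ∘ Equiv.swap (1 : Fin 4) 3 := by
    funext i; fin_cases i <;> simp [Equiv.swap_apply_def]
  rw [h1, AlternatingMap.map_swap _ _ (by decide), AlternatingMap.map_swap _ _ (by decide),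
    neg_neg]

private lemma R_sq (x1 x2 x3 x4 : M) :
    (ι ℂ x1 * ι ℂ x2 + ι ℂ x2 * ι ℂ x3 + ι ℂ x3 * ι ℂ x4) *
      (ι ℂ x1 * ι ℂ x2 + ι ℂ x2 * ι ℂ x3 + ι ℂ x3 * ι ℂ x4) =
    (2 : ℂ) • (ι ℂ x1 * (ι ℂ x2 * (ι ℂ x3 * ι ℂ x4))) := by
  simp only [mul_add, add_mul, mul_assoc]
  rw [quad_zero x1 x2 x1 x2 (i := 0) (j := 2) rfl (by decide),
    quad_zero x1 x2 x2 x3 (i := 1) (j := 2) rfl (by decide),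
    quad_zero x2 x3 x1 x2 (i := 0) (j := 3) rfl (by decide),
    quad_zero x2 x3 x2 x3 (i := 0) (j := 2) rfl (by decide),
    quad_zero x2 x3 x3 x4 (i := 1) (j := 2) rfl (by decide),
    quad_zero x3 x4 x2 x3 (i := 0) (j := 3) rfl (by decide),
    quad_zero x3 x4 x3 x4 (i := 0) (j := 2) rfl (by decide),
    quad_rot x1 x2 x3 x4]
  rw [two_smul]
  abel

private lemma trip0 (x y : M) : ι ℂ x * (ι ℂ x * ι ℂ y) = 0 := by
  rw [← mul_assoc, ι_sq_zero, zero_mul]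

private lemma trip1 (x y : M) : ι ℂ y * (ι ℂ x * ι ℂ y) = 0 := by
  rw [← mul_assoc, iota_swap y x, neg_mul, mul_assoc, ι_sq_zero, mul_zero, neg_zero]

private lemma quadk0 (x y z : M) : ι ℂ x * (ι ℂ x * (ι ℂ y * ι ℂ z)) = 0 :=
  quad_zero x x y z (i := 0) (j := 1) rfl (by decide)

private lemma quadk1 (x y z : M) : ι ℂ y * (ι ℂ x * (ι ℂ y * ι ℂ z)) = 0 :=
  quad_zero y x y z (i := 0) (j := 2) rfl (by decide)

private lemma quadk2 (x y z : M) : ι ℂ z * (ι ℂ x * (ι ℂ y * ι ℂ z)) = 0 :=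
  quad_zero z x y z (i := 0) (j := 3) rfl (by decide)

end Aux

noncomputable def sv (N i : ℕ) : Fin N → ℂ := fun k => if (k : ℕ) + 1 = i then 1 else 0

private lemma e_eq (N i : ℕ) : e N i = ι ℂ (sv N i) := rfl

/-- in `Λ(ℂ^{n+4})`, if `u` lies in the subalgebra generated by
`e_1,…,e_n` and is homogeneous of odd degree, and `u∧w = c·e_1∧…∧e_n`, then for all `D`:
`(u∧R) ∧ (w∧R − u∧D) = 2c·a_{n+1,n+1}·a_{n+2,n+2}·a_{n+3,n+3}·a_{n+4,n+4}·e_1∧…∧e_{n+4}`. -/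
theorem stmt_11 (n : ℕ) (hn : 1 ≤ n)
    (u w : ExteriorAlgebra ℂ (Fin (n + 4) → ℂ)) (c : ℂ)
    (hu_alg : u ∈ Algebra.adjoin ℂ {x | ∃ i, 1 ≤ i ∧ i ≤ n ∧ x = e (n + 4) i})
    (hu_hom : ∃ k, Odd k ∧ u ∈ (LinearMap.range (ExteriorAlgebra.ι ℂ :
      (Fin (n + 4) → ℂ) →ₗ[ℂ] ExteriorAlgebra ℂ (Fin (n + 4) → ℂ))) ^ k)
    (huw : u * w = c • wedgeSeq (n + 4) 1 n)
    (a : ℕ → ℕ → ℂ) (D : ExteriorAlgebra ℂ (Fin (n + 4) → ℂ)) :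
    (u * Rform n a) * (w * Rform n a - u * D) =
      (2 * c * a (n + 1) (n + 1) * a (n + 2) (n + 2) * a (n + 3) (n + 3) *
        a (n + 4) (n + 4)) • wedgeSeq (n + 4) 1 (n + 4) := by
  obtain ⟨k, hk, hu⟩ := hu_hom
  have huu : u * u = 0 := odd_sq_zero hk hu
  have hη : ∀ j, ∃ v, ηform n a j = ι ℂ v := by
    intro j
    refine ⟨∑ i ∈ Finset.Icc j (n + 4), a j i • sv (n + 4) i, ?_⟩
    simp only [ηform, e_eq, ← map_smul, ← map_sum]
  obtain ⟨v1, hv1⟩ := hη (n+1)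
  obtain ⟨v2, hv2⟩ := hη (n+2)
  obtain ⟨v3, hv3⟩ := hη (n+3)
  obtain ⟨v4, hv4⟩ := hη (n+4)
  have hRform : Rform n a =
      ι ℂ v1 * ι ℂ v2 + ι ℂ v2 * ι ℂ v3 + ι ℂ v3 * ι ℂ v4 := by
    rw [Rform, hv1, hv2, hv3, hv4]
  have hRc : ∀ z, Rform n a * z = z * Rform n a := by
    intro z
    rw [hRform]
    simp only [add_mul, mul_add, two_form_comm]
  -- Icc decompositions
  have hD : ηform n a (n+4) = a (n+4) (n+4) • e (n+4) (n+4) := by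
    rw [ηform, Finset.Icc_self, Finset.sum_singleton]
  have hC : ηform n a (n+3) =
      a (n+3) (n+3) • e (n+4) (n+3) + a (n+3) (n+4) • e (n+4) (n+4) := by
    rw [ηform, show Finset.Icc (n+3) (n+4) = {n+3, n+4} from by
      ext x; simp [Finset.mem_Icc]; omega]
    rw [Finset.sum_insert (by simp), Finset.sum_singleton]
  have hB : ηform n a (n+2) =
      a (n+2) (n+2) • e (n+4) (n+2) + (a (n+2) (n+3) • e (n+4) (n+3) +
        a (n+2) (n+4) • e (n+4) (n+4)) := by
    rw [ηform, show Finset.Icc (n+2) (n+4) = {n+2, n+3, n+4} from by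
      ext x; simp [Finset.mem_Icc]; omega]
    rw [Finset.sum_insert (by simp), Finset.sum_insert (by simp), Finset.sum_singleton]
  have hA : ηform n a (n+1) =
      a (n+1) (n+1) • e (n+4) (n+1) + (a (n+1) (n+2) • e (n+4) (n+2) +
        (a (n+1) (n+3) • e (n+4) (n+3) + a (n+1) (n+4) • e (n+4) (n+4))) := by
    rw [ηform, show Finset.Icc (n+1) (n+4) = {n+1, n+2, n+3, n+4} from by
      ext x; simp [Finset.mem_Icc]; omega]
    rw [Finset.sum_insert (by simp), Finset.sum_insert (by simp),
      Finset.sum_insert (by simp), Finset.sum_singleton]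
  have h34 : ηform n a (n+3) * ηform n a (n+4) =
      (a (n+3) (n+3) * a (n+4) (n+4)) • (e (n+4) (n+3) * e (n+4) (n+4)) := by
    rw [hC, hD]
    simp only [add_mul, smul_mul_assoc, mul_smul_comm, smul_smul, e_eq, ι_sq_zero,
      smul_zero, add_zero]
    congr 1
    ring
  have h234 : ηform n a (n+2) * (e (n+4) (n+3) * e (n+4) (n+4)) =
      a (n+2) (n+2) • (e (n+4) (n+2) * (e (n+4) (n+3) * e (n+4) (n+4))) := by
    rw [hB]
    simp only [add_mul, smul_mul_assoc, e_eq, trip0, trip1, smul_zero, add_zero]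
  have h1234 : ηform n a (n+1) * (e (n+4) (n+2) * (e (n+4) (n+3) * e (n+4) (n+4))) =
      a (n+1) (n+1) •
        (e (n+4) (n+1) * (e (n+4) (n+2) * (e (n+4) (n+3) * e (n+4) (n+4)))) := by
    rw [hA]
    simp only [add_mul, smul_mul_assoc, e_eq, quadk0, quadk1, quadk2, smul_zero, add_zero]
  have hR2 : Rform n a * Rform n a =
      (2 * a (n+1) (n+1) * (a (n+2) (n+2) * (a (n+3) (n+3) * a (n+4) (n+4)))) •
        (e (n+4) (n+1) * (e (n+4) (n+2) * (e (n+4) (n+3) * e (n+4) (n+4)))) := by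
    rw [hRform, R_sq]
    rw [← hv1, ← hv2, ← hv3, ← hv4]
    rw [h34, mul_smul_comm, h234, mul_smul_comm, mul_smul_comm, h1234]
    rw [smul_smul, smul_smul, smul_smul]
    ring_nf
  have hws : wedgeSeq (n+4) 1 (n+4) = wedgeSeq (n+4) 1 n *
      (e (n+4) (n+1) * (e (n+4) (n+2) * (e (n+4) (n+3) * e (n+4) (n+4)))) := by
    have hsplit : List.range' 1 (n+4) = List.range' 1 n ++ List.range' (1+n) 4 := by
      rw [List.range'_append_1]
    rw [wedgeSeq, wedgeSeq, hsplit, List.map_append, List.prod_append]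
    congr 1
    have : List.range' (1+n) 4 = [n+1, n+2, n+3, n+4] := by
      simp [List.range'_succ]
      omega
    rw [this]
    simp [mul_assoc]
  have key1 : (u * Rform n a) * (u * D) = 0 := by
    rw [mul_assoc u (Rform n a) (u * D), hRc (u * D), ← mul_assoc, ← mul_assoc, huu,
      zero_mul, zero_mul]
  have key2 : (u * Rform n a) * (w * Rform n a) = (u * w) * (Rform n a * Rform n a) := by
    rw [mul_assoc u (Rform n a) (w * Rform n a), hRc (w * Rform n a),
      mul_assoc w (Rform n a) (Rform n a), ← mul_assoc]
  rw [mul_sub, key1, sub_zero, key2, huw, hR2, hws, smul_mul_assoc, mul_smul_comm,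
    smul_smul]
  congr 1
  ring
end
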